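/- The lattice N(E_6^4) — the lattice in ℝ²⁴ (with Gram matrix the block diagonal G(E_6)⁴) generated by ℤ²⁴ together with the vectors (v,0,v,2v)ᵀ and (v,2v,0,v)ᵀ where v = (1/3)(1,−1,0,1,−1,0)ᵀ — is an even unimodular lattice of rank 24. -/

import Mathlib

/-- The Gram matrix `G(E₆)`. -/
def GE6 : Matrix (Fin 6) (Fin 6) ℝ :=
  !![ 2, -1,  0,  0,  0,  0;
     -1,  2, -1,  0,  0,  0;
      0, -1,  2, -1,  0, -1;
      0,  0, -1,  2, -1,  0;
      0,  0,  0, -1,  2,  0;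
      0,  0, -1,  0,  0,  2]

/-- The glue vector `v = (1/3)(1,−1,0,1,−1,0)`. -/
noncomputable def vE6 : Fin 6 → ℝ := fun i => (1 / 3) * ![1, -1, 0, 1, -1, 0] i

/-- The bilinear form on `ℝ²⁴ = (ℝ⁶)⁴` given by the block diagonal Gram matrix
`G(E₆)⁴`. -/
noncomputable def BE6 (x y : Fin 4 × Fin 6 → ℝ) : ℝ :=
  ∑ p : Fin 4 × Fin 6, ∑ j : Fin 6, x p * GE6 p.2 j * y (p.1, j)

/-- The Niemeier lattice `N(E₆⁴)`: the ℤ-span of `ℤ²⁴` together with the glue vectors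
`(v,0,v,2v)` and `(v,2v,0,v)`. -/
noncomputable def NE6 : Submodule ℤ (Fin 4 × Fin 6 → ℝ) :=
  Submodule.span ℤ
    ({x : Fin 4 × Fin 6 → ℝ | ∀ p, ∃ m : ℤ, x p = (m : ℝ)} ∪
      {fun p => ![vE6, 0, vE6, 2 • vE6] p.1 p.2,
       fun p => ![vE6, 2 • vE6, 0, vE6] p.1 p.2})

/-! ### Auxiliary integer data -/

def Gz : Matrix (Fin 6) (Fin 6) ℤ :=
  !![ 2, -1,  0,  0,  0,  0;
     -1,  2, -1,  0,  0,  0;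
      0, -1,  2, -1,  0, -1;
      0,  0, -1,  2, -1,  0;
      0,  0,  0, -1,  2,  0;
      0,  0, -1,  0,  0,  2]

def Az : Matrix (Fin 6) (Fin 6) ℤ :=
  !![1,-1,0,0,0,0; 0,1,-1,0,0,0; 0,0,1,-1,0,-1; 0,0,0,1,-1,0; 0,0,0,0,1,0; 0,0,0,0,0,1]

def Mp : Matrix (Fin 6) (Fin 6) ℤ :=
  !![1,1,2,1,0,1; 2,4,4,3,2,2; 2,4,6,4,2,3; 1,2,4,3,1,2; 1,2,2,2,2,1; 1,2,3,2,1,2]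

def fz : Fin 6 → ℤ := ![1,2,0,1,2,0]
def u0 : Fin 6 → ℤ := ![1,-1,0,1,-1,0]
def A1 : Fin 4 → ℤ := ![1,0,1,2]
def A2 : Fin 4 → ℤ := ![1,2,0,1]

noncomputable def gl1 : Fin 4 × Fin 6 → ℝ := fun p => ![vE6, 0, vE6, 2 • vE6] p.1 p.2
noncomputable def gl2 : Fin 4 × Fin 6 → ℝ := fun p => ![vE6, 2 • vE6, 0, vE6] p.1 p.2

noncomputable def bf (x y : Fin 6 → ℝ) : ℝ := ∑ i, ∑ j, x i * GE6 i j * y j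

lemma GE6_cast (i j : Fin 6) : GE6 i j = (Gz i j : ℝ) := by
  fin_cases i <;> fin_cases j <;> norm_num [GE6, Gz]

lemma Gz_symm : ∀ i j : Fin 6, Gz i j = Gz j i := by intro i j; fin_cases i <;> fin_cases j <;> rfl

lemma Gz_A : ∀ i j : Fin 6, Gz i j = Az i j + Az j i := by intro i j; fin_cases i <;> fin_cases j <;> rfl

lemma NGz : ∀ i j : Fin 6,
    (∑ l, (3 * Mp i l + u0 i * fz l) * Gz j l) = 3 * (if i = j then 1 else 0) := by decide

lemma vE6_eq (i : Fin 6) : vE6 i = (u0 i : ℝ) / 3 := by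
  fin_cases i <;> norm_num [vE6, u0]

lemma Gzu : ∀ i, (∑ j, Gz i j * u0 j) = 3 * u0 i := by decide

lemma u0sq : (∑ i, u0 i * u0 i) = 4 := by decide

lemma Gv (i : Fin 6) : ∑ j, GE6 i j * vE6 j = (u0 i : ℝ) := by
  have h : ∑ j, GE6 i j * vE6 j = ((∑ j, Gz i j * u0 j : ℤ) : ℝ) / 3 := by
    push_cast
    rw [Finset.sum_div]
    refine Finset.sum_congr rfl fun j _ => ?_
    rw [GE6_cast, vE6_eq]; ring
  rw [h, Gzu]; push_cast; ring

/-! ### Basic facts about `bf` and `BE6` -/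

lemma BE6_blocks (x y : Fin 4 × Fin 6 → ℝ) :
    BE6 x y = ∑ k : Fin 4, bf (fun i => x (k, i)) (fun j => y (k, j)) := by
  rw [BE6, Fintype.sum_prod_type]; rfl

lemma bf_comm (x y : Fin 6 → ℝ) : bf x y = bf y x := by
  rw [bf, bf, Finset.sum_comm]
  refine Finset.sum_congr rfl fun j _ => Finset.sum_congr rfl fun i _ => ?_
  rw [GE6_cast i j, GE6_cast j i, Gz_symm i j]; ring

lemma bf_v_right (x : Fin 6 → ℝ) : bf x vE6 = ∑ i, x i * (u0 i : ℝ) := by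
  rw [bf]
  refine Finset.sum_congr rfl fun i _ => ?_
  rw [← Gv i, Finset.mul_sum]
  exact Finset.sum_congr rfl fun j _ => by ring

lemma bf_vv : bf vE6 vE6 = 4 / 3 := by
  rw [bf_v_right]
  have h : ∑ i, vE6 i * (u0 i : ℝ) = ((∑ i, u0 i * u0 i : ℤ) : ℝ) / 3 := by
    push_cast
    rw [Finset.sum_div]
    refine Finset.sum_congr rfl fun i _ => ?_
    rw [vE6_eq]; ring
  rw [h, u0sq]; norm_num

lemma sum_int {α : Type*} [Fintype α] (f : α → ℝ) (h : ∀ i, ∃ m : ℤ, f i = (m : ℝ)) :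
    ∃ m : ℤ, ∑ i, f i = (m : ℝ) := by
  choose g hg using h
  exact ⟨∑ i, g i, by push_cast; exact Finset.sum_congr rfl fun i _ => hg i⟩

lemma bf_int (x y : Fin 6 → ℝ) (hx : ∀ i, ∃ m : ℤ, x i = (m : ℝ))
    (hy : ∀ i, ∃ m : ℤ, y i = (m : ℝ)) : ∃ m : ℤ, bf x y = (m : ℝ) := by
  rw [bf]
  refine sum_int _ fun i => sum_int _ fun j => ?_
  obtain ⟨a, ha⟩ := hx i
  obtain ⟨b, hb⟩ := hy j
  exact ⟨a * Gz i j * b, by rw [ha, hb, GE6_cast]; push_cast; ring⟩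

lemma int_even (g : Fin 6 → ℤ) :
    (∑ i, ∑ j, g i * Gz i j * g j) = 2 * ∑ i, ∑ j, g i * Az i j * g j := by
  have h1 : (∑ i, ∑ j, g i * Gz i j * g j)
      = (∑ i, ∑ j, (g i * Az i j * g j + g j * Az j i * g i)) := by
    refine Finset.sum_congr rfl fun i _ => Finset.sum_congr rfl fun j _ => ?_
    rw [Gz_A i j]; ring
  have h2 : (∑ i : Fin 6, ∑ j : Fin 6, g j * Az j i * g i)
      = ∑ i : Fin 6, ∑ j : Fin 6, g i * Az i j * g j := by rw [Finset.sum_comm]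
  rw [h1]
  simp only [Finset.sum_add_distrib]
  rw [h2]; ring

lemma bf_even (x : Fin 6 → ℝ) (hx : ∀ i, ∃ m : ℤ, x i = (m : ℝ)) :
    ∃ m : ℤ, bf x x = 2 * (m : ℝ) := by
  choose g hg using hx
  refine ⟨∑ i, ∑ j, g i * Az i j * g j, ?_⟩
  have h : bf x x = ((∑ i, ∑ j, g i * Gz i j * g j : ℤ) : ℝ) := by
    rw [bf]; push_cast
    exact Finset.sum_congr rfl fun i _ => Finset.sum_congr rfl fun j _ => by
      rw [hg i, hg j, GE6_cast]
  rw [h, int_even]; push_cast; ring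

lemma bf_expand (z w : Fin 6 → ℝ) (c d : ℝ) :
    bf (fun i => z i + c * vE6 i) (fun j => w j + d * vE6 j)
      = bf z w + c * bf vE6 w + d * bf z vE6 + c * d * (4 / 3) := by
  rw [← bf_vv]
  simp only [bf]
  have h1 : ∀ i : Fin 6, ∀ j : Fin 6,
      (z i + c * vE6 i) * GE6 i j * (w j + d * vE6 j)
        = z i * GE6 i j * w j + c * (vE6 i * GE6 i j * w j)
          + d * (z i * GE6 i j * vE6 j) + c * d * (vE6 i * GE6 i j * vE6 j) := by
    intro i j; ring
  simp only [h1, Finset.sum_add_distrib, ← Finset.mul_sum]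

/-! ### The submodule of integer vectors, and membership in `NE6` -/

def Zsub : Submodule ℤ (Fin 4 × Fin 6 → ℝ) where
  carrier := {x | ∀ p, ∃ m : ℤ, x p = (m : ℝ)}
  add_mem' := by
    rintro x y hx hy p
    obtain ⟨a, ha⟩ := hx p
    obtain ⟨b, hb⟩ := hy p
    exact ⟨a + b, by rw [Pi.add_apply, ha, hb]; push_cast; ring⟩
  zero_mem' := fun p => ⟨0, by simp⟩
  smul_mem' := by
    rintro c x hx p
    obtain ⟨a, ha⟩ := hx p
    exact ⟨c * a, by rw [Pi.smul_apply, zsmul_eq_mul, ha]; push_cast; ring⟩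

lemma NE6_eq : NE6 = Zsub ⊔ Submodule.span ℤ {gl1, gl2} := by
  rw [NE6, Submodule.span_union]
  congr 1
  exact Submodule.span_eq Zsub

lemma Zsub_le_NE6 (x : Fin 4 × Fin 6 → ℝ) (hx : ∀ p, ∃ m : ℤ, x p = (m : ℝ)) : x ∈ NE6 :=
  Submodule.subset_span (Or.inl hx)

lemma gl1_mem : gl1 ∈ NE6 :=
  Submodule.subset_span (Or.inr (by left; rfl))

lemma gl2_mem : gl2 ∈ NE6 :=
  Submodule.subset_span (Or.inr (by right; rfl))

lemma mem_NE6 (x : Fin 4 × Fin 6 → ℝ) (hx : x ∈ NE6) :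
    ∃ (z : Fin 4 × Fin 6 → ℝ) (a b : ℤ),
      (∀ p, ∃ m : ℤ, z p = (m : ℝ)) ∧ x = z + a • gl1 + b • gl2 := by
  rw [NE6_eq] at hx
  obtain ⟨z, hz, w, hw, hzw⟩ := Submodule.mem_sup.mp hx
  obtain ⟨a, b, hab⟩ := Submodule.mem_span_pair.mp hw
  exact ⟨z, a, b, hz, by rw [← hzw, ← hab]; abel⟩

lemma gl1_eq (k : Fin 4) (i : Fin 6) : gl1 (k, i) = (A1 k : ℝ) * vE6 i := by
  fin_cases k <;> simp [gl1, A1]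

lemma gl2_eq (k : Fin 4) (i : Fin 6) : gl2 (k, i) = (A2 k : ℝ) * vE6 i := by
  fin_cases k <;> simp [gl2, A2]

/-- The standard basis vectors. -/
def ee (q : Fin 4 × Fin 6) : Fin 4 × Fin 6 → ℝ := fun p => if p = q then 1 else 0

lemma ee_mem (q : Fin 4 × Fin 6) : ee q ∈ NE6 :=
  Zsub_le_NE6 _ fun p => ⟨if p = q then 1 else 0, by by_cases h : p = q <;> simp [ee, h]⟩

/-! ### Block decomposition of lattice elements -/

lemma decomp_apply (z : Fin 4 × Fin 6 → ℝ) (a b : ℤ) (k : Fin 4) (i : Fin 6) :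
    (z + a • gl1 + b • gl2) (k, i)
      = z (k, i) + ((a * A1 k + b * A2 k : ℤ) : ℝ) * vE6 i := by
  rw [Pi.add_apply, Pi.add_apply, Pi.smul_apply, Pi.smul_apply, zsmul_eq_mul, zsmul_eq_mul,
    gl1_eq, gl2_eq]
  push_cast; ring

lemma bf_block (z w : Fin 4 × Fin 6 → ℝ) (a b a' b' : ℤ) (k : Fin 4) :
    bf (fun i => (z + a • gl1 + b • gl2) (k, i)) (fun j => (w + a' • gl1 + b' • gl2) (k, j))
      = bf (fun i => z (k, i)) (fun j => w (k, j))
        + ((a * A1 k + b * A2 k : ℤ) : ℝ) * bf vE6 (fun j => w (k, j))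
        + ((a' * A1 k + b' * A2 k : ℤ) : ℝ) * bf (fun i => z (k, i)) vE6
        + ((a * A1 k + b * A2 k : ℤ) : ℝ) * ((a' * A1 k + b' * A2 k : ℤ) : ℝ) * (4 / 3) := by
  have e1 : (fun i => (z + a • gl1 + b • gl2) (k, i))
      = fun i => z (k, i) + ((a * A1 k + b * A2 k : ℤ) : ℝ) * vE6 i :=
    funext fun i => decomp_apply z a b k i
  have e2 : (fun j => (w + a' • gl1 + b' • gl2) (k, j))
      = fun j => w (k, j) + ((a' * A1 k + b' * A2 k : ℤ) : ℝ) * vE6 j :=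
    funext fun j => decomp_apply w a' b' k j
  rw [e1, e2]
  exact bf_expand _ _ _ _

/-! ### Evenness -/

lemma NE6_even (x : Fin 4 × Fin 6 → ℝ) (hx : x ∈ NE6) : ∃ m : ℤ, BE6 x x = 2 * (m : ℝ) := by
  obtain ⟨z, a, b, hz, rfl⟩ := mem_NE6 x hx
  have hzi : ∀ (k : Fin 4) (i : Fin 6), ∃ m : ℤ, z (k, i) = (m : ℝ) := fun k i => hz (k, i)
  have hmz : ∀ k : Fin 4, ∃ m : ℤ, bf (fun i => z (k, i)) (fun j => z (k, j)) = 2 * (m : ℝ) :=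
    fun k => bf_even _ (hzi k)
  choose mz hmz using hmz
  have htz : ∀ k : Fin 4, ∃ m : ℤ, bf (fun i => z (k, i)) vE6 = (m : ℝ) := by
    intro k
    rw [bf_v_right]
    refine sum_int _ fun i => ?_
    obtain ⟨m, hm⟩ := hzi k i
    exact ⟨m * u0 i, by rw [hm]; push_cast; ring⟩
  choose tz htz using htz
  have hbk : ∀ k : Fin 4,
      bf (fun i => (z + a • gl1 + b • gl2) (k, i)) (fun j => (z + a • gl1 + b • gl2) (k, j))
        = 2 * (mz k : ℝ) + 2 * ((a * A1 k + b * A2 k : ℤ) : ℝ) * (tz k : ℝ)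
          + ((a * A1 k + b * A2 k : ℤ) : ℝ) ^ 2 * (4 / 3) := by
    intro k
    rw [bf_block z z a b a b k, hmz k, bf_comm vE6 (fun j => z (k, j)), htz k]
    ring
  rw [BE6_blocks, Finset.sum_congr rfl fun k _ => hbk k]
  refine ⟨(∑ k, (mz k + (a * A1 k + b * A2 k) * tz k)) + 4 * a ^ 2 + 4 * a * b + 4 * b ^ 2, ?_⟩
  rw [Fin.sum_univ_four]
  push_cast [Fin.sum_univ_four]
  simp [A1, A2]
  ring

/-! ### Integrality of the pairing on the lattice -/

lemma NE6_pair_int (y x : Fin 4 × Fin 6 → ℝ) (hy : y ∈ NE6) (hx : x ∈ NE6) :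
    ∃ m : ℤ, BE6 y x = (m : ℝ) := by
  obtain ⟨z', a', b', hz', rfl⟩ := mem_NE6 y hy
  obtain ⟨z, a, b, hz, rfl⟩ := mem_NE6 x hx
  have hzi : ∀ (k : Fin 4) (i : Fin 6), ∃ m : ℤ, z (k, i) = (m : ℝ) := fun k i => hz (k, i)
  have hzi' : ∀ (k : Fin 4) (i : Fin 6), ∃ m : ℤ, z' (k, i) = (m : ℝ) := fun k i => hz' (k, i)
  have hs : ∀ k : Fin 4, ∃ m : ℤ, bf (fun i => z' (k, i)) (fun j => z (k, j)) = (m : ℝ) :=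
    fun k => bf_int _ _ (hzi' k) (hzi k)
  choose s hs using hs
  have htz : ∀ k : Fin 4, ∃ m : ℤ, bf (fun i => z (k, i)) vE6 = (m : ℝ) := by
    intro k
    rw [bf_v_right]
    refine sum_int _ fun i => ?_
    obtain ⟨m, hm⟩ := hzi k i
    exact ⟨m * u0 i, by rw [hm]; push_cast; ring⟩
  choose t ht using htz
  have htz' : ∀ k : Fin 4, ∃ m : ℤ, bf (fun i => z' (k, i)) vE6 = (m : ℝ) := by
    intro k
    rw [bf_v_right]
    refine sum_int _ fun i => ?_
    obtain ⟨m, hm⟩ := hzi' k i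
    exact ⟨m * u0 i, by rw [hm]; push_cast; ring⟩
  choose t' ht' using htz'
  have hbk : ∀ k : Fin 4,
      bf (fun i => (z' + a' • gl1 + b' • gl2) (k, i)) (fun j => (z + a • gl1 + b • gl2) (k, j))
        = (s k : ℝ) + ((a' * A1 k + b' * A2 k : ℤ) : ℝ) * (t k : ℝ)
          + ((a * A1 k + b * A2 k : ℤ) : ℝ) * (t' k : ℝ)
          + ((a' * A1 k + b' * A2 k : ℤ) : ℝ) * ((a * A1 k + b * A2 k : ℤ) : ℝ) * (4 / 3) := by
    intro k
    rw [bf_block z' z a' b' a b k, hs k, bf_comm vE6 (fun j => z (k, j)), ht k, ht' k]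
  rw [BE6_blocks, Finset.sum_congr rfl fun k _ => hbk k]
  refine ⟨(∑ k, (s k + (a' * A1 k + b' * A2 k) * t k + (a * A1 k + b * A2 k) * t' k))
      + 8 * a' * a + 4 * a' * b + 4 * b' * a + 8 * b' * b, ?_⟩
  rw [Fin.sum_univ_four]
  push_cast [Fin.sum_univ_four]
  simp [A1, A2]
  ring

/-! ### The dual lattice is contained in the lattice -/

lemma bf_smul_right (x w : Fin 6 → ℝ) (c : ℝ) :
    bf x (fun j => c * w j) = c * bf x w := by
  simp only [bf, Finset.mul_sum]
  exact Finset.sum_congr rfl fun i _ => Finset.sum_congr rfl fun j _ => by ring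

lemma sum_v_u0 : ∑ i, vE6 i * (u0 i : ℝ) = 4 / 3 := by
  have h : ∑ i, vE6 i * (u0 i : ℝ) = ((∑ i, u0 i * u0 i : ℤ) : ℝ) / 3 := by
    push_cast
    rw [Finset.sum_div]
    refine Finset.sum_congr rfl fun i _ => ?_
    rw [vE6_eq]; ring
  rw [h, u0sq]; norm_num

lemma dual_mem (y : Fin 4 × Fin 6 → ℝ)
    (hy : ∀ x ∈ NE6, ∃ m : ℤ, BE6 y x = (m : ℝ)) : y ∈ NE6 := by
  -- Step A: pairing with standard basis vectors
  have key : ∀ (k : Fin 4) (l : Fin 6), BE6 y (ee (k, l)) = ∑ i, y (k, i) * GE6 i l := by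
    intro k l
    rw [BE6, Fintype.sum_prod_type]
    have h1 : ∀ (k' : Fin 4) (i : Fin 6), (∑ j, y (k', i) * GE6 i j * ee (k, l) (k', j))
        = if k' = k then y (k, i) * GE6 i l else 0 := by
      intro k' i
      by_cases hk : k' = k
      · subst hk
        have e : ∀ j : Fin 6, y (k', i) * GE6 i j * ee (k', l) (k', j)
            = if j = l then y (k', i) * GE6 i j else 0 := by
          intro j
          simp [ee, Prod.ext_iff, mul_ite, mul_one, mul_zero]
        rw [Finset.sum_congr rfl fun j _ => e j,
          Finset.sum_ite_eq' Finset.univ l (fun j => y (k', i) * GE6 i j)]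
        simp
      · have e : ∀ j : Fin 6, y (k', i) * GE6 i j * ee (k, l) (k', j) = 0 := by
          intro j
          simp [ee, Prod.ext_iff, hk]
        rw [if_neg hk, Finset.sum_congr rfl fun j _ => e j]
        simp
    calc (∑ k' : Fin 4, ∑ i : Fin 6, ∑ j : Fin 6, y (k', i) * GE6 i j * ee (k, l) (k', j))
        = ∑ k' : Fin 4, ∑ i : Fin 6, (if k' = k then y (k, i) * GE6 i l else 0) :=
          Finset.sum_congr rfl fun k' _ => Finset.sum_congr rfl fun i _ => h1 k' i
      _ = ∑ k' : Fin 4, (if k' = k then (∑ i, y (k, i) * GE6 i l) else 0) := by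
          refine Finset.sum_congr rfl fun k' _ => ?_
          by_cases hk : k' = k <;> simp [hk]
      _ = ∑ i, y (k, i) * GE6 i l := by simp
  have h2 : ∀ (k : Fin 4) (l : Fin 6), ∃ m : ℤ, (∑ i, y (k, i) * GE6 i l) = (m : ℝ) := by
    intro k l
    rw [← key]
    exact hy _ (ee_mem _)
  choose W hW using h2
  -- Step B: reconstruct y from the integer data
  have main : ∀ (k : Fin 4) (i : Fin 6),
      3 * y (k, i) = ∑ l, ((3 * Mp i l + u0 i * fz l : ℤ) : ℝ) * (W k l : ℝ) := by
    intro k i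
    symm
    calc (∑ l, ((3 * Mp i l + u0 i * fz l : ℤ) : ℝ) * (W k l : ℝ))
        = ∑ l, ∑ j, y (k, j) * GE6 j l * ((3 * Mp i l + u0 i * fz l : ℤ) : ℝ) := by
          refine Finset.sum_congr rfl fun l _ => ?_
          rw [← hW k l, mul_comm, Finset.sum_mul]
      _ = ∑ j, ∑ l, y (k, j) * GE6 j l * ((3 * Mp i l + u0 i * fz l : ℤ) : ℝ) := by
          rw [Finset.sum_comm]
      _ = ∑ j, y (k, j) * ((∑ l, (3 * Mp i l + u0 i * fz l) * Gz j l : ℤ) : ℝ) := by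
          refine Finset.sum_congr rfl fun j _ => ?_
          push_cast
          rw [Finset.mul_sum]
          refine Finset.sum_congr rfl fun l _ => ?_
          rw [GE6_cast]; push_cast; ring
      _ = ∑ j, y (k, j) * ((3 : ℝ) * if i = j then 1 else 0) := by
          refine Finset.sum_congr rfl fun j _ => ?_
          rw [NGz i j]
          congr 1
          split <;> norm_num
      _ = y (k, i) * 3 := by
          simp [mul_ite, mul_one, mul_zero, Finset.sum_ite_eq]
      _ = 3 * y (k, i) := by ring
  obtain ⟨Z, c, hy_eq⟩ :
      ∃ (Z : Fin 4 → Fin 6 → ℤ) (c : Fin 4 → ℤ),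
        ∀ k i, y (k, i) = (Z k i : ℝ) + (c k : ℝ) * vE6 i := by
    refine ⟨fun k i => ∑ l, Mp i l * W k l, fun k => ∑ l, fz l * W k l, fun k i => ?_⟩
    have h3 : (3 : ℝ) * y (k, i)
        = 3 * ((∑ l, Mp i l * W k l : ℤ) : ℝ) + ((∑ l, fz l * W k l : ℤ) : ℝ) * (u0 i : ℝ) := by
      rw [main k i]
      push_cast
      rw [Finset.mul_sum, Finset.sum_mul, ← Finset.sum_add_distrib]
      refine Finset.sum_congr rfl fun l _ => by ring
    rw [vE6_eq]
    linarith [h3]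
  -- Step C: the block pairings with the glue vector
  obtain ⟨T, hT⟩ : ∃ T : Fin 4 → ℤ,
      ∀ k, bf (fun i => y (k, i)) vE6 = (T k : ℝ) + (c k : ℝ) * (4 / 3) := by
    refine ⟨fun k => ∑ i, Z k i * u0 i, fun k => ?_⟩
    rw [bf_v_right]
    calc (∑ i, y (k, i) * (u0 i : ℝ))
        = ∑ i, ((Z k i : ℝ) * (u0 i : ℝ) + (c k : ℝ) * (vE6 i * (u0 i : ℝ))) := by
          refine Finset.sum_congr rfl fun i _ => ?_
          rw [hy_eq k i]; ring
      _ = (∑ i, (Z k i : ℝ) * (u0 i : ℝ)) + (c k : ℝ) * ∑ i, vE6 i * (u0 i : ℝ) := by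
          rw [Finset.sum_add_distrib, Finset.mul_sum]
      _ = ((∑ i, Z k i * u0 i : ℤ) : ℝ) + (c k : ℝ) * (4 / 3) := by
          rw [sum_v_u0]; push_cast; ring
  -- Step D: integrality constraints from the glue vectors
  obtain ⟨m1, hm1⟩ := hy gl1 gl1_mem
  obtain ⟨m2, hm2⟩ := hy gl2 gl2_mem
  have h1 : (m1 : ℝ) = ∑ k, (A1 k : ℝ) * ((T k : ℝ) + (c k : ℝ) * (4 / 3)) := by
    rw [← hm1, BE6_blocks]
    refine Finset.sum_congr rfl fun k _ => ?_
    have e : (fun j => gl1 (k, j)) = fun j => (A1 k : ℝ) * vE6 j := funext (gl1_eq k)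
    rw [e, bf_smul_right, hT k]
  have h2' : (m2 : ℝ) = ∑ k, (A2 k : ℝ) * ((T k : ℝ) + (c k : ℝ) * (4 / 3)) := by
    rw [← hm2, BE6_blocks]
    refine Finset.sum_congr rfl fun k _ => ?_
    have e : (fun j => gl2 (k, j)) = fun j => (A2 k : ℝ) * vE6 j := funext (gl2_eq k)
    rw [e, bf_smul_right, hT k]
  have e1 : (4 * (c 0 + c 2 + 2 * c 3) : ℤ) = 3 * (m1 - (T 0 + T 2 + 2 * T 3)) := by
    have hr : ((4 * (c 0 + c 2 + 2 * c 3) : ℤ) : ℝ)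
        = ((3 * (m1 - (T 0 + T 2 + 2 * T 3)) : ℤ) : ℝ) := by
      rw [Fin.sum_univ_four] at h1
      simp only [A1, Matrix.cons_val_zero, Matrix.cons_val_one, Matrix.head_cons,
        Matrix.cons_val_two, Matrix.cons_val_three, Matrix.tail_cons] at h1
      push_cast at h1 ⊢
      linarith [h1]
    exact_mod_cast hr
  have e2 : (4 * (c 0 + 2 * c 1 + c 3) : ℤ) = 3 * (m2 - (T 0 + 2 * T 1 + T 3)) := by
    have hr : ((4 * (c 0 + 2 * c 1 + c 3) : ℤ) : ℝ)
        = ((3 * (m2 - (T 0 + 2 * T 1 + T 3)) : ℤ) : ℝ) := by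
      rw [Fin.sum_univ_four] at h2'
      simp only [A2, Matrix.cons_val_zero, Matrix.cons_val_one, Matrix.head_cons,
        Matrix.cons_val_two, Matrix.cons_val_three, Matrix.tail_cons] at h2'
      push_cast at h2' ⊢
      linarith [h2']
    exact_mod_cast hr
  have div1 : (3 : ℤ) ∣ c 0 + c 2 + 2 * c 3 := by omega
  have div2 : (3 : ℤ) ∣ c 0 + 2 * c 1 + c 3 := by omega
  -- Step E: decode the glue code
  have hd : ∀ k : Fin 4, ∃ dk : ℤ, c k = c 2 * A1 k + 2 * c 1 * A2 k + 3 * dk := by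
    intro k
    refine ⟨(c k - c 2 * A1 k - 2 * c 1 * A2 k) / 3, ?_⟩
    fin_cases k <;> simp [A1, A2] <;> omega
  choose d hd using hd
  -- Step F: conclude
  have hrep : y = (fun p => y p - (c 2 : ℝ) * gl1 p - (2 * c 1 : ℝ) * gl2 p)
      + (c 2 : ℤ) • gl1 + (2 * c 1 : ℤ) • gl2 := by
    funext p
    simp only [Pi.add_apply, Pi.smul_apply, Pi.mul_apply, Pi.intCast_apply, zsmul_eq_mul]
    push_cast
    ring
  rw [hrep]
  refine Submodule.add_mem _ (Submodule.add_mem _ (Zsub_le_NE6 _ ?_)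
    (Submodule.smul_mem _ _ gl1_mem)) (Submodule.smul_mem _ _ gl2_mem)
  rintro ⟨k, i⟩
  refine ⟨Z k i + d k * u0 i, ?_⟩
  have hdk : (c k : ℝ) = (c 2 : ℝ) * (A1 k : ℝ) + 2 * (c 1 : ℝ) * (A2 k : ℝ) + 3 * (d k : ℝ) := by
    exact_mod_cast congrArg (Int.cast : ℤ → ℝ) (hd k)
  show y (k, i) - (c 2 : ℝ) * gl1 (k, i) - (2 * c 1 : ℝ) * gl2 (k, i) = _
  rw [hy_eq k i, gl1_eq, gl2_eq, vE6_eq]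
  push_cast
  linear_combination ((u0 i : ℝ) / 3) * hdk

/-! ### Rank -/

noncomputable def v3 (q : Fin 4 × Fin 6) : Fin 4 × Fin 6 → ℝ := (3⁻¹ : ℝ) • ee q

lemma ee_apply (q p : Fin 4 × Fin 6) : ee q p = if p = q then 1 else 0 := rfl

lemma v3_apply (q p : Fin 4 × Fin 6) : v3 q p = if p = q then (3⁻¹ : ℝ) else 0 := by
  rw [v3, Pi.smul_apply, smul_eq_mul, ee_apply]
  split <;> norm_num

lemma zsmul_inj : Function.Injective fun (r : ℤ) => r • (1 : ℝ) := by
  intro a b h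
  simpa using h

lemma li_ee : LinearIndependent ℤ ee := by
  have h := (Pi.basisFun ℝ (Fin 4 × Fin 6)).linearIndependent
  have e : ⇑(Pi.basisFun ℝ (Fin 4 × Fin 6)) = ee := by
    funext q p
    rw [Pi.basisFun_apply, ee_apply, Pi.single_apply]
  rw [e] at h
  exact h.restrict_scalars zsmul_inj

lemma li_v3 : LinearIndependent ℤ v3 := by
  have h := (Pi.basisFun ℝ (Fin 4 × Fin 6)).linearIndependent
  have e : ⇑(Pi.basisFun ℝ (Fin 4 × Fin 6)) = ee := by
    funext q p
    rw [Pi.basisFun_apply, ee_apply, Pi.single_apply]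
  rw [e] at h
  have h2 := h.map' ((3⁻¹ : ℝ) • (LinearMap.id : (Fin 4 × Fin 6 → ℝ) →ₗ[ℝ] (Fin 4 × Fin 6 → ℝ))) (by
    rw [LinearMap.ker_smul _ _ (by norm_num : (3⁻¹ : ℝ) ≠ 0)]
    exact LinearMap.ker_id)
  have e2 : (⇑((3⁻¹ : ℝ) • (LinearMap.id : (Fin 4 × Fin 6 → ℝ) →ₗ[ℝ] (Fin 4 × Fin 6 → ℝ))) ∘ ee) = v3 := by
    funext q
    simp [v3, Function.comp]
  rw [e2] at h2
  exact h2.restrict_scalars zsmul_inj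

lemma ee_inj : Function.Injective ee := by
  intro q q' h
  by_contra hne
  have h2 := congrFun h q
  simp only [ee_apply, if_pos rfl, if_neg hne] at h2
  exact one_ne_zero h2

lemma v3_inj : Function.Injective v3 := by
  intro q q' h
  by_contra hne
  have h2 := congrFun h q
  simp only [v3_apply, if_pos rfl, if_neg hne] at h2
  norm_num at h2

lemma span_ee_le : Submodule.span ℤ (Set.range ee) ≤ NE6 := by
  rw [Submodule.span_le]
  rintro _ ⟨q, rfl⟩
  exact ee_mem q

lemma NE6_le_span_v3 : NE6 ≤ Submodule.span ℤ (Set.range v3) := by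
  rw [NE6, Submodule.span_le]
  rintro x (hx | hx)
  · choose m hm using hx
    have hx_eq : x = ∑ q, (3 * m q) • v3 q := by
      funext p
      rw [Finset.sum_apply]
      have e : ∀ q, ((3 * m q) • v3 q) p = if p = q then (m q : ℝ) else 0 := by
        intro q
        rw [Pi.smul_apply, zsmul_eq_mul, v3_apply]
        split <;> push_cast <;> ring
      rw [Finset.sum_congr rfl fun q _ => e q, Finset.sum_ite_eq]
      simp [hm p]
    rw [hx_eq]
    exact Submodule.sum_mem _ fun q _ => Submodule.smul_mem _ _
      (Submodule.subset_span ⟨q, rfl⟩)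
  · have hgl : ∀ (w : Fin 4 × Fin 6 → ℝ) (A : Fin 4 → ℤ),
        (∀ k i, w (k, i) = (A k : ℝ) * vE6 i) → w ∈ Submodule.span ℤ (Set.range v3) := by
      intro w A hA
      have hw_eq : w = ∑ q, (A q.1 * u0 q.2) • v3 q := by
        funext p
        rw [Finset.sum_apply]
        have e : ∀ q, ((A q.1 * u0 q.2) • v3 q) p
            = if p = q then (A q.1 : ℝ) * (u0 q.2 : ℝ) * 3⁻¹ else 0 := by
          intro q
          rw [Pi.smul_apply, zsmul_eq_mul, v3_apply]
          split <;> push_cast <;> ring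
        rw [Finset.sum_congr rfl fun q _ => e q, Finset.sum_ite_eq]
        obtain ⟨k, i⟩ := p
        rw [hA k i, vE6_eq]
        simp
        ring
      rw [hw_eq]
      exact Submodule.sum_mem _ fun q _ => Submodule.smul_mem _ _
        (Submodule.subset_span ⟨q, rfl⟩)
    rcases hx with hx | hx
    · exact hx ▸ hgl gl1 A1 gl1_eq
    · simp only [Set.mem_singleton_iff] at hx
      exact hx ▸ hgl gl2 A2 gl2_eq

lemma rank_NE6 : Module.rank ℤ NE6 = 24 := by
  have hcard : (Cardinal.mk (Fin 4 × Fin 6)) = 24 := by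
    simp [Cardinal.mk_fintype]
  have r1 : Module.rank ℤ (Submodule.span ℤ (Set.range ee)) = 24 := by
    rw [rank_span li_ee, Cardinal.mk_range_eq _ ee_inj, hcard]
  have r2 : Module.rank ℤ (Submodule.span ℤ (Set.range v3)) = 24 := by
    rw [rank_span li_v3, Cardinal.mk_range_eq _ v3_inj, hcard]
  refine le_antisymm ?_ ?_
  · rw [← r2]
    exact Submodule.rank_mono NE6_le_span_v3
  · rw [← r1]
    exact Submodule.rank_mono span_ee_le

/-! ### Main theorem -/

/-- `N(E₆⁴)` is an even unimodular lattice of rank 24 with respect to the bilinear form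
given by the block diagonal Gram matrix `G(E₆)⁴`. -/
theorem stmt19 :
    -- even
    (∀ x ∈ NE6, ∃ m : ℤ, BE6 x x = 2 * (m : ℝ)) ∧
    -- unimodular: the lattice equals its dual
    (∀ y : Fin 4 × Fin 6 → ℝ,
      (∀ x ∈ NE6, ∃ m : ℤ, BE6 y x = (m : ℝ)) ↔ y ∈ NE6) ∧
    -- rank 24
    Module.finrank ℤ NE6 = 24 := by
  refine ⟨NE6_even, fun y => ⟨dual_mem y, fun hy x hx => NE6_pair_int y x hy hx⟩, ?_⟩
  exact Module.finrank_eq_of_rank_eq (by rw [rank_NE6]; norm_num)
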